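/- Let B ≥ 2 and let m be an odd integer with 3 ≤ m ≤ 2B−1. Consider the equiangular azimuth samples φ_p = 2π(p−1)/(m−1) for p = 1,…,m, together with any elevations θ_1,…,θ_m ∈ [0,π] such that all columns of the spherical-harmonic sensing matrix A ∈ ℂ^{m×B^2} are nonzero. Then μ(A) = 1; in particular, the two columns corresponding to orders k = (m−1)/2 and k = −(m−1)/2 of any common degree l ≥ (m−1)/2 are proportional. -/

import Mathlib

open scoped Real BigOperators

/-- Associated Legendre polynomial `P_l^k(x)` for integer order `k` (possibly negative). -/
noncomputable def assocLegendre (l : ℕ) (k : ℤ) (x : ℝ) : ℝ :=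
  ((-1 : ℝ) ^ k / (2 ^ l * (Nat.factorial l : ℝ))) * (1 - x ^ 2) ^ ((k : ℝ) / 2) *
    iteratedDeriv (k + (l : ℤ)).toNat (fun y : ℝ => (y ^ 2 - 1) ^ l) x

/-- Normalization factor of spherical harmonics. -/
noncomputable def shNormFactor (l : ℕ) (k : ℤ) : ℝ :=
  Real.sqrt ((2 * (l : ℝ) + 1) / (4 * Real.pi) *
    ((Nat.factorial ((l : ℤ) - k).toNat : ℝ) / (Nat.factorial ((l : ℤ) + k).toNat : ℝ)))

/-- Spherical harmonic `Y_l^k(θ,φ)`. -/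
noncomputable def sphericalHarmonic (l : ℕ) (k : ℤ) (θ φ : ℝ) : ℂ :=
  ((shNormFactor l k * assocLegendre l k (Real.cos θ) : ℝ) : ℂ) *
    Complex.exp (Complex.I * (k : ℂ) * (φ : ℂ))

/-- Jacobi polynomial `P_α^{(ξ,λ)}(x)`. -/
noncomputable def jacobiP (a ξ lam : ℕ) (x : ℝ) : ℝ :=
  ((-1 : ℝ) ^ a / (2 ^ a * (Nat.factorial a : ℝ))) * (1 - x) ^ (-(ξ : ℤ)) *
    (1 + x) ^ (-(lam : ℤ)) *
    iteratedDeriv a (fun y : ℝ => (1 - y) ^ ξ * (1 + y) ^ lam * (1 - y ^ 2) ^ a) x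

/-- The coefficient `γ = α!(α+ξ+λ)!/((α+ξ)!(α+λ)!)`. -/
noncomputable def jacobiGamma (a ξ lam : ℕ) : ℝ :=
  ((Nat.factorial a : ℝ) * (Nat.factorial (a + ξ + lam) : ℝ)) /
    ((Nat.factorial (a + ξ) : ℝ) * (Nat.factorial (a + lam) : ℝ))

/-- Wigner d-function `d_l^{k,n}(cos θ)` (as a function of `θ`). -/
noncomputable def wignerd (l : ℕ) (k n : ℤ) (θ : ℝ) : ℝ :=
  let ξ : ℕ := (k - n).natAbs
  let lam : ℕ := (k + n).natAbs
  let a : ℕ := l - (ξ + lam) / 2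
  let ω : ℝ := if k ≤ n then 1 else (-1 : ℝ) ^ (n - k)
  ω * Real.sqrt (jacobiGamma a ξ lam) * (Real.sin (θ / 2)) ^ ξ * (Real.cos (θ / 2)) ^ lam *
    jacobiP a ξ lam (Real.cos θ)

/-- Wigner D-function `D_l^{k,n}(θ,φ,χ)`. -/
noncomputable def wignerD (l : ℕ) (k n : ℤ) (θ φ χ : ℝ) : ℂ :=
  ((Real.sqrt ((2 * (l : ℝ) + 1) / (8 * Real.pi ^ 2)) : ℝ) : ℂ) *
    Complex.exp (-(Complex.I * (k : ℂ) * (φ : ℂ))) * ((wignerd l k n θ : ℝ) : ℂ) *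
    Complex.exp (-(Complex.I * (n : ℂ) * (χ : ℂ)))

/-- Column index set for the spherical-harmonic sensing matrix: pairs `(l,k)`,
`0 ≤ l ≤ B-1`, `-l ≤ k ≤ l`.  It has `B^2` elements. -/
abbrev SHIndex (B : ℕ) := Σ l : Fin B, ↥(Set.Icc (-(l.1 : ℤ)) (l.1 : ℤ))

/-- Column index set for the Wigner-D sensing matrix: triples `(l,k,n)`,
`0 ≤ l ≤ B-1`, `-l ≤ k,n ≤ l`.  It has `B(2B-1)(2B+1)/3` elements. -/
abbrev WDIndex (B : ℕ) :=
  Σ l : Fin B, ↥(Set.Icc (-(l.1 : ℤ)) (l.1 : ℤ)) × ↥(Set.Icc (-(l.1 : ℤ)) (l.1 : ℤ))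

/-- The spherical-harmonic sensing matrix. -/
noncomputable def shMatrix {m : ℕ} (B : ℕ) (θ φ : Fin m → ℝ) :
    Matrix (Fin m) (SHIndex B) ℂ :=
  fun p i => sphericalHarmonic i.1.1 i.2.1 (θ p) (φ p)

/-- The Wigner-D sensing matrix. -/
noncomputable def wdMatrix {m : ℕ} (B : ℕ) (θ φ χ : Fin m → ℝ) :
    Matrix (Fin m) (WDIndex B) ℂ :=
  fun p i => wignerD i.1.1 i.2.1.1 i.2.2.1 (θ p) (φ p) (χ p)

/-- Mutual coherence of a matrix: the supremum over pairs of distinct columns of the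
normalized absolute inner product. -/
noncomputable def mutualCoherence {m : ℕ} {ι : Type*} (A : Matrix (Fin m) ι ℂ) : ℝ :=
  sSup {x : ℝ | ∃ i j : ι, i ≠ j ∧
    x = ‖∑ p, (starRingEnd ℂ) (A p i) * A p j‖ /
        (Real.sqrt (∑ p, Complex.normSq (A p i)) * Real.sqrt (∑ p, Complex.normSq (A p j)))}


open Polynomial in
private theorem aux_coeff_id (l k i : ℕ) (hk : k ≤ l) (hi : i ≤ l - k) :
    (l+k).factorial * ((l-k).choose i * (l.descFactorial (l-k-i) * l.descFactorial i))
    = (l-k).factorial * ((l+k).choose (k+i) * (l.descFactorial (l-i) * l.descFactorial (k+i))) := by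
  have cast_eq : ((l+k).factorial * ((l-k).choose i * (l.descFactorial (l-k-i) * l.descFactorial i)) : ℚ)
      = ((l-k).factorial * ((l+k).choose (k+i) * (l.descFactorial (l-i) * l.descFactorial (k+i))) : ℚ) := by
    rw [Nat.descFactorial_eq_factorial_mul_choose l (l-k-i),
        Nat.descFactorial_eq_factorial_mul_choose l i,
        Nat.descFactorial_eq_factorial_mul_choose l (l-i),
        Nat.descFactorial_eq_factorial_mul_choose l (k+i)]
    push_cast
    rw [Nat.cast_choose ℚ (by omega : i ≤ l - k), Nat.cast_choose ℚ (by omega : k + i ≤ l + k),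
        Nat.cast_choose ℚ (by omega : l - k - i ≤ l), Nat.cast_choose ℚ (by omega : i ≤ l),
        Nat.cast_choose ℚ (by omega : l - i ≤ l), Nat.cast_choose ℚ (by omega : k + i ≤ l)]
    have e1 : l - k - i = l - (k+i) := by omega
    have e2 : l - (l - (k+i)) = k+i := by omega
    have e3 : l - (l - i) = i := by omega
    have e5 : l + k - (k+i) = l - i := by omega
    rw [e1, e2, e3, e5]
    have h1 : ∀ n : ℕ, ((n.factorial : ℚ)) ≠ 0 := fun n => by exact_mod_cast n.factorial_ne_zero
    field_simp
  exact_mod_cast cast_eq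

open Polynomial in
private theorem aux_poly_id (l k : ℕ) (hk : k ≤ l) :
    ((l+k).factorial : ℝ[X]) * derivative^[l-k] (((X:ℝ[X])^2 - 1)^l)
    = ((l-k).factorial : ℝ[X]) * ((X^2 - 1)^k * derivative^[l+k] ((X^2-1)^l)) := by
  have hd1 : ∀ n j : ℕ, derivative^[j] ((X - 1 : ℝ[X])^n) = n.descFactorial j • (X - 1)^(n-j) := by
    intro n j
    have := Polynomial.iterate_derivative_X_sub_pow n j (1:ℝ)
    simpa using this
  have hd2 : ∀ n j : ℕ, derivative^[j] ((X + 1 : ℝ[X])^n) = n.descFactorial j • (X + 1)^(n-j) := by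
    intro n j
    have := Polynomial.iterate_derivative_X_add_pow n j (1:ℝ)
    simpa using this
  have hsplit : ((X:ℝ[X])^2 - 1) = (X - 1) * (X + 1) := by ring
  rw [hsplit, mul_pow, mul_pow, Polynomial.iterate_derivative_mul,
    Polynomial.iterate_derivative_mul, Finset.mul_sum, Finset.mul_sum, Finset.mul_sum]
  have key : ∀ j ∈ Finset.range (l+k+1), j ∉ Finset.Ico k (l+1) →
      ((l-k).factorial : ℝ[X]) *
        ((X - 1)^k * (X + 1)^k *
          ((l+k).choose j • (derivative^[l+k-j] ((X - 1)^l) * derivative^[j] ((X + 1)^l)))) = 0 := by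
    intro j hj hj2
    simp only [Finset.mem_Ico, Finset.mem_range, not_and_or, not_le, not_lt] at hj hj2
    rcases hj2 with h | h
    · rw [hd1, Nat.descFactorial_eq_zero_iff_lt.mpr (by omega)]
      simp
    · rw [hd2, Nat.descFactorial_eq_zero_iff_lt.mpr (by omega)]
      simp
  have hsub : Finset.Ico k (l+1) ⊆ Finset.range (l+k+1) := by
    intro j hj; simp only [Finset.mem_Ico] at hj; simp only [Finset.mem_range]; omega
  rw [show Nat.succ (l+k) = l+k+1 from rfl, ← Finset.sum_subset hsub key]
  rw [Finset.sum_Ico_eq_sum_range]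
  rw [show l + 1 - k = l - k + 1 from by omega, show Nat.succ (l-k) = l - k + 1 from rfl]
  refine Finset.sum_congr rfl fun i hi => ?_
  simp only [Finset.mem_range] at hi
  have hi' : i ≤ l - k := by omega
  rw [hd1, hd2, hd1, hd2]
  rw [show l - (l - k - i) = k + i from by omega, show l + k - (k + i) = l - i from by omega,
      show l - (l - i) = i from by omega]
  have hc : (((l+k).factorial * ((l-k).choose i * (l.descFactorial (l-k-i) * l.descFactorial i)) : ℕ) : ℝ[X])
      = (((l-k).factorial * ((l+k).choose (k+i) * (l.descFactorial (l-i) * l.descFactorial (k+i))) : ℕ) : ℝ[X]) := by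
    exact_mod_cast congrArg (Nat.cast : ℕ → ℝ[X]) (aux_coeff_id l k i hk hi')
  push_cast at hc
  simp only [nsmul_eq_mul, Nat.cast_mul]
  rw [show l - (k + i) = l - k - i from by omega]
  rw [show l - i = l - k - i + k from by omega] at hc ⊢
  linear_combination ((X - 1:ℝ[X])^(k+i) * (X+1)^(l-k-i) * (X+1)^k) * hc

open Polynomial in
private theorem aux_iter_poly (l n : ℕ) (x : ℝ) :
    iteratedDeriv n (fun y : ℝ => (y ^ 2 - 1) ^ l) x
    = (derivative^[n] (((X:ℝ[X])^2 - 1)^l)).eval x := by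
  induction n generalizing x with
  | zero => simp
  | succ n ih =>
    rw [iteratedDeriv_succ, Function.iterate_succ_apply']
    have : deriv (iteratedDeriv n (fun y : ℝ => (y ^ 2 - 1) ^ l)) x
        = deriv (fun y => (derivative^[n] (((X:ℝ[X])^2 - 1)^l)).eval y) x := by
      apply Filter.EventuallyEq.deriv_eq
      filter_upwards with y using ih y
    rw [this, Polynomial.deriv]

open Polynomial in
private theorem aux_sh_neg (l k : ℕ) (hk1 : 1 ≤ k) (hk : k ≤ l) (x : ℝ) (hx1 : -1 ≤ x) (hx2 : x ≤ 1) :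
    shNormFactor l (-(k:ℤ)) * assocLegendre l (-(k:ℤ)) x
    = (-1:ℝ)^k * (shNormFactor l (k:ℤ) * assocLegendre l (k:ℤ) x) := by
  have ha : (0:ℝ) < ((l+k).factorial : ℝ) := by exact_mod_cast (l+k).factorial_pos
  have hb : (0:ℝ) < ((l-k).factorial : ℝ) := by exact_mod_cast (l-k).factorial_pos
  set a := ((l+k).factorial : ℝ)
  set b := ((l-k).factorial : ℝ)
  set c0 := (2*(l:ℝ)+1)/(4*Real.pi) with hc0def
  have hc0 : 0 ≤ c0 := by
    apply div_nonneg
    · positivity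
    · positivity
  set D : ℝ := (derivative^[l+k] (((X:ℝ[X])^2-1)^l)).eval x with hDdef
  have hN1 : shNormFactor l (-(k:ℤ)) = Real.sqrt (c0 * (a/b)) := by
    unfold shNormFactor
    rw [show ((l:ℤ) - -(k:ℤ)).toNat = l + k from by omega,
        show ((l:ℤ) + -(k:ℤ)).toNat = l - k from by omega]
  have hN2 : shNormFactor l ((k:ℤ)) = Real.sqrt (c0 * (b/a)) := by
    unfold shNormFactor
    rw [show ((l:ℤ) - (k:ℤ)).toNat = l - k from by omega,
        show ((l:ℤ) + (k:ℤ)).toNat = l + k from by omega]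
  have hD : (derivative^[l-k] (((X:ℝ[X])^2-1)^l)).eval x = (b/a) * ((x^2-1)^k * D) := by
    have h := congrArg (fun p : ℝ[X] => p.eval x) (aux_poly_id l k hk)
    simp only [eval_mul, eval_natCast, eval_pow, eval_sub, eval_one, eval_X] at h
    rw [hDdef]
    field_simp at h ⊢
    linarith [h]
  have hAL1 : assocLegendre l (-(k:ℤ)) x
      = ((-1:ℝ)^k / (2^l * (l.factorial:ℝ))) * (1-x^2) ^ (-(k:ℝ)/2) * ((b/a) * ((x^2-1)^k * D)) := by
    unfold assocLegendre
    rw [show ((-(k:ℤ)) + (l:ℤ)).toNat = l - k from by omega, aux_iter_poly, hD,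
        zpow_neg, zpow_natCast, ← inv_pow, inv_neg, inv_one, Int.cast_neg, Int.cast_natCast]
  have hAL2 : assocLegendre l ((k:ℤ)) x
      = ((-1:ℝ)^k / (2^l * (l.factorial:ℝ))) * (1-x^2) ^ ((k:ℝ)/2) * D := by
    unfold assocLegendre
    rw [show ((k:ℤ) + (l:ℤ)).toNat = l + k from by omega, aux_iter_poly,
        zpow_natCast, Int.cast_natCast]
  rw [hN1, hN2, hAL1, hAL2]
  have hkR : (0:ℝ) < (k:ℝ) := by exact_mod_cast hk1
  rcases eq_or_lt_of_le (show 0 ≤ 1 - x^2 by nlinarith) with ht | ht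
  · rw [← ht, Real.zero_rpow (ne_of_lt (by linarith : -(k:ℝ)/2 < 0)),
        Real.zero_rpow (ne_of_gt (by linarith : (0:ℝ) < (k:ℝ)/2))]
    ring
  · have hxk : ((x:ℝ)^2-1)^k = (-1:ℝ)^k * (1-x^2)^(k:ℕ) := by
      rw [show (x^2-1) = -(1-x^2) by ring, neg_pow]
    have hrp : (1-x^2) ^ (-(k:ℝ)/2) * (1-x^2)^(k:ℕ) = (1-x^2) ^ ((k:ℝ)/2) := by
      rw [← Real.rpow_natCast (1-x^2) k, ← Real.rpow_add ht]
      congr 1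
      ring
    have hsq : Real.sqrt (c0 * (a/b)) * (b/a) = Real.sqrt (c0 * (b/a)) := by
      rw [show c0 * (b/a) = (c0 * (a/b)) * (b/a)^2 from by field_simp,
          Real.sqrt_mul (mul_nonneg hc0 (le_of_lt (div_pos ha hb))),
          Real.sqrt_sq (le_of_lt (div_pos hb ha))]
    calc Real.sqrt (c0 * (a/b)) * ((-1:ℝ)^k / (2^l * (l.factorial:ℝ)) * (1-x^2) ^ (-(k:ℝ)/2) * ((b/a) * ((x^2-1)^k * D)))
        = (Real.sqrt (c0 * (a/b)) * (b/a)) * ((-1:ℝ)^k / (2^l * (l.factorial:ℝ)) * (((1-x^2) ^ (-(k:ℝ)/2) * (1-x^2)^(k:ℕ)) * ((-1:ℝ)^k * D))) := by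
          rw [hxk]; ring
      _ = Real.sqrt (c0 * (b/a)) * ((-1:ℝ)^k / (2^l * (l.factorial:ℝ)) * ((1-x^2) ^ ((k:ℝ)/2) * ((-1:ℝ)^k * D))) := by
          rw [hsq, hrp]
      _ = (-1:ℝ)^k * (Real.sqrt (c0 * (b/a)) * ((-1:ℝ)^k / (2^l * (l.factorial:ℝ)) * (1-x^2) ^ ((k:ℝ)/2) * D)) := by
          ring

private theorem aux_Y_prop (l k : ℕ) (hk1 : 1 ≤ k) (hk : k ≤ l) (θv φv : ℝ)
    (hexp : Complex.exp (Complex.I * ((-(k:ℤ) : ℤ) : ℂ) * (φv : ℂ))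
          = Complex.exp (Complex.I * (((k:ℤ) : ℤ) : ℂ) * (φv : ℂ))) :
    sphericalHarmonic l (-(k:ℤ)) θv φv
      = (((-1:ℝ)^k : ℝ) : ℂ) * sphericalHarmonic l ((k:ℤ)) θv φv := by
  unfold sphericalHarmonic
  rw [hexp]
  have h := aux_sh_neg l k hk1 hk (Real.cos θv) (Real.neg_one_le_cos θv) (Real.cos_le_one θv)
  rw [h]
  push_cast
  ring

/-- for an odd number `3 ≤ m ≤ 2B-1` of equiangular azimuth samples
`φ_p = 2π(p-1)/(m-1)`, the spherical-harmonic sensing matrix has mutual coherence `1`;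
in particular the two columns of orders `k = ±(m-1)/2` of any common degree
`l ≥ (m-1)/2` are proportional. -/
theorem shMatrix_equiangular_full_coherence (B m : ℕ) (hB : 2 ≤ B)
    (hm₁ : 3 ≤ m) (hm₂ : m ≤ 2 * B - 1) (hmodd : Odd m)
    (θ φ : Fin m → ℝ) (hθ : ∀ p, θ p ∈ Set.Icc 0 Real.pi)
    (hφ : ∀ p : Fin m, φ p = 2 * Real.pi * (p : ℕ) / ((m : ℝ) - 1))
    (hcols : ∀ i : SHIndex B, ∃ p, shMatrix B θ φ p i ≠ 0) :
    mutualCoherence (shMatrix B θ φ) = 1 ∧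
      ∀ l : ℕ, (m - 1) / 2 ≤ l → l ≤ B - 1 →
        ∃ c : ℂ, ∀ p : Fin m,
          sphericalHarmonic l (-(((m - 1) / 2 : ℕ) : ℤ)) (θ p) (φ p) =
            c * sphericalHarmonic l (((m - 1) / 2 : ℕ) : ℤ) (θ p) (φ p) := by
  have hK1 : 1 ≤ (m-1)/2 := by omega
  have hKl2 : m - 1 = 2 * ((m-1)/2) := by obtain ⟨t, ht⟩ := hmodd; omega
  set K := (m-1)/2 with hKdef
  have hKB : K < B := by omega
  -- the phase identity at the sample points
  have hexp : ∀ p : Fin m,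
      Complex.exp (Complex.I * ((-(K:ℤ) : ℤ) : ℂ) * ((φ p : ℝ) : ℂ))
        = Complex.exp (Complex.I * (((K:ℤ) : ℤ) : ℂ) * ((φ p : ℝ) : ℂ)) := by
    intro p
    rw [Complex.exp_eq_exp_iff_exists_int]
    refine ⟨-(p:ℕ), ?_⟩
    have hm1 : ((m:ℝ) - 1) = ((2*K : ℕ) : ℝ) := by
      rw [← hKl2, Nat.cast_sub (by omega : 1 ≤ m), Nat.cast_one]
    have hφeq : (φ p) * (2*(K:ℝ)) = 2*Real.pi*((p:ℕ):ℝ) := by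
      rw [hφ p, hm1]
      have h2K : ((2*K:ℕ):ℝ) ≠ 0 := by
        have : (0:ℕ) < 2*K := by omega
        exact_mod_cast this.ne'
      field_simp
      push_cast
      ring
    have hC := congrArg (Complex.ofReal) hφeq
    push_cast at hC ⊢
    linear_combination (-Complex.I) * hC
  -- proportionality of the two special columns of each degree l
  have hprop : ∀ l : ℕ, K ≤ l → ∀ p : Fin m,
      sphericalHarmonic l (-(K:ℤ)) (θ p) (φ p)
        = (((-1:ℝ)^K : ℝ) : ℂ) * sphericalHarmonic l ((K:ℤ)) (θ p) (φ p) :=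
    fun l hKl p => aux_Y_prop l K hK1 hKl (θ p) (φ p) (hexp p)
  constructor
  · -- mutual coherence = 1
    set A := shMatrix B θ φ with hA
    apply IsGreatest.csSup_eq
    constructor
    · -- 1 is attained
      have hmem1 : -(K:ℤ) ∈ Set.Icc (-(((⟨K, hKB⟩ : Fin B) : ℕ) : ℤ)) ((((⟨K, hKB⟩ : Fin B) : ℕ)) : ℤ) := by
        simp only [Set.mem_Icc]
        omega
      have hmem2 : (K:ℤ) ∈ Set.Icc (-(((⟨K, hKB⟩ : Fin B) : ℕ) : ℤ)) ((((⟨K, hKB⟩ : Fin B) : ℕ)) : ℤ) := by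
        simp only [Set.mem_Icc]
        omega
      refine ⟨⟨⟨K, hKB⟩, ⟨-(K:ℤ), hmem1⟩⟩, ⟨⟨K, hKB⟩, ⟨(K:ℤ), hmem2⟩⟩, ?_, ?_⟩
      · intro h
        have h2 := congrArg (fun s : SHIndex B => (s.2.1 : ℤ)) h
        simp only at h2
        omega
      · -- the coherence value of this pair is 1
        set i : SHIndex B := ⟨⟨K, hKB⟩, ⟨-(K:ℤ), hmem1⟩⟩ with hi
        set j : SHIndex B := ⟨⟨K, hKB⟩, ⟨(K:ℤ), hmem2⟩⟩ with hj
        set c : ℂ := (((-1:ℝ)^K : ℝ) : ℂ) with hc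
        have hAij : ∀ p, A p i = c * A p j := fun p => hprop K le_rfl p
        set S : ℝ := ∑ p, Complex.normSq (A p j) with hSdef
        have hS : 0 < S := by
          obtain ⟨p, hp⟩ := hcols j
          have h1 : 0 < Complex.normSq (A p j) := Complex.normSq_pos.mpr hp
          have h2 : Complex.normSq (A p j) ≤ S := by
            apply Finset.single_le_sum (f := fun q => Complex.normSq (A q j))
              (fun q _ => Complex.normSq_nonneg _) (Finset.mem_univ p)
          linarith
        have hnum : (∑ p, (starRingEnd ℂ) (A p i) * A p j) = (starRingEnd ℂ) c * (S:ℂ) := by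
          simp only [hAij, map_mul]
          rw [Finset.sum_congr rfl (fun p _ => mul_assoc _ _ _), ← Finset.mul_sum]
          congr 1
          rw [hSdef]
          push_cast
          refine Finset.sum_congr rfl fun p _ => ?_
          rw [Complex.normSq_eq_conj_mul_self]
        have hden1 : (∑ p, Complex.normSq (A p i)) = S := by
          rw [hSdef]
          refine Finset.sum_congr rfl fun p _ => ?_
          rw [hAij p, Complex.normSq_mul, hc, Complex.normSq_ofReal,
            show ((-1:ℝ)^K * (-1:ℝ)^K) = 1 from by
              rw [← pow_add]
              exact (neg_one_pow_eq_one_iff_even (by norm_num)).mpr ⟨K, by ring⟩]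
          rw [one_mul]
        have habs : ‖(starRingEnd ℂ) c * (S:ℂ)‖ = S := by
          rw [hc, Complex.conj_ofReal, ← Complex.ofReal_mul, Complex.norm_real, Real.norm_eq_abs,
            abs_mul, abs_pow, abs_neg, abs_one, one_pow, one_mul, abs_of_pos hS]
        rw [hnum, habs, hden1, Real.mul_self_sqrt (le_of_lt hS)]
        rw [div_self (ne_of_gt hS)]
    · -- 1 is an upper bound
      rintro x ⟨i, j, hij, rfl⟩
      set v : EuclideanSpace ℂ (Fin m) := WithLp.toLp 2 (fun p => A p i) with hv
      set w : EuclideanSpace ℂ (Fin m) := WithLp.toLp 2 (fun p => A p j) with hw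
      have hnormv : Real.sqrt (∑ p, Complex.normSq (A p i)) = ‖v‖ := by
        rw [EuclideanSpace.norm_eq]
        congr 1
        refine Finset.sum_congr rfl fun p _ => ?_
        exact Complex.normSq_eq_norm_sq _
      have hnormw : Real.sqrt (∑ p, Complex.normSq (A p j)) = ‖w‖ := by
        rw [EuclideanSpace.norm_eq]
        congr 1
        refine Finset.sum_congr rfl fun p _ => ?_
        exact Complex.normSq_eq_norm_sq _
      have hcs : ‖∑ p, (starRingEnd ℂ) (A p i) * A p j‖ ≤ ‖v‖ * ‖w‖ := by
        have h := norm_inner_le_norm (𝕜 := ℂ) v w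
        rw [PiLp.inner_apply] at h
        simp only [RCLike.inner_apply'] at h
        exact h
      rw [hnormv, hnormw]
      exact div_le_one_of_le₀ hcs (mul_nonneg (norm_nonneg _) (norm_nonneg _))
  · -- proportional columns
    intro l hKl hlB
    exact ⟨(((-1:ℝ)^K : ℝ) : ℂ), fun p => hprop l hKl p⟩
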